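/- Let B be an n×n real symmetric matrix having at least one positive eigenvalue, b ∈ ℝⁿ and k ∈ ℝ. Let γ₁ > ⋯ > γ_q be the distinct nonzero eigenvalues of B (so γ₁ > 0), with multiplicities m₁, …, m_q, let m₀ := n − (m₁ + ⋯ + m_q) be the dimension of the null space of B, let lᵢ ≥ 0 be the Euclidean norm of the orthogonal projection of b onto the γᵢ-eigenspace of B (i = 1, …, q), and l₀ ≥ 0 that of the projection of b onto the null space of B. Set δᵢ := lᵢ/|γᵢ|, ε := l₀ and k* := k + Σᵢ₌₁^q lᵢ²/γᵢ. Then there exist an orthogonal n×n matrix V and a vector a ∈ ℝⁿ such that: VᵀBV = blockdiag(O_{m₀}, γ₁I_{m₁}, …, γ_qI_{m_q}); Vᵀ(b + Ba) = ε·e, where e is the standard basis vector whose single nonzero coordinate is the first coordinate of the O_{m₀} block; −Vᵀa equals the vector which is zero on the null-space block and whose component in the γᵢ block is δᵢ times the first standard basis vector of that block, for each i = 1, …, q; and k − aᵀ(2b + Ba) = k*. -/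

import Mathlib

open Matrix

lemma hh_aux {ι : Type*} [Fintype ι] (u c : ι → ℝ) :
    (Matrix.vecMulVec u u).mulVec c = (u ⬝ᵥ c) • u := by
  funext i
  simp only [Matrix.mulVec, dotProduct, Matrix.vecMulVec_apply, Pi.smul_apply,
    smul_eq_mul]
  rw [Finset.sum_mul]
  exact Finset.sum_congr rfl fun j _ => by ring

lemma hh_aux2 {ι : Type*} [Fintype ι] (u : ι → ℝ) :
    Matrix.vecMulVec u u * Matrix.vecMulVec u u = (u ⬝ᵥ u) • Matrix.vecMulVec u u := by
  ext i j
  simp only [Matrix.mul_apply, Matrix.vecMulVec_apply, Matrix.smul_apply, dotProduct,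
    smul_eq_mul]
  rw [Finset.sum_mul]
  exact Finset.sum_congr rfl fun k _ => by ring

lemma exists_orth {ι : Type*} [Fintype ι] [DecidableEq ι] (c z : ι → ℝ)
    (h : ∑ i, c i ^ 2 = ∑ i, z i ^ 2) :
    ∃ P : Matrix ι ι ℝ, Pᵀ = P ∧ P * P = 1 ∧ P.mulVec c = z := by
  by_cases hcz : c = z
  · exact ⟨1, Matrix.transpose_one, by rw [mul_one], by rw [Matrix.one_mulVec, hcz]⟩
  · set u : ι → ℝ := c - z with hudef
    have hu0 : u ≠ 0 := sub_ne_zero_of_ne hcz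
    have hs : u ⬝ᵥ u ≠ 0 := fun hh => hu0 (dotProduct_self_eq_zero.mp hh)
    have hkey : u ⬝ᵥ u = 2 * (u ⬝ᵥ c) := by
      have h2 : u ⬝ᵥ u - 2 * (u ⬝ᵥ c) = (∑ i, z i ^ 2) - ∑ i, c i ^ 2 := by
        simp only [dotProduct, hudef, Pi.sub_apply, Finset.mul_sum,
          ← Finset.sum_sub_distrib]
        exact Finset.sum_congr rfl fun i _ => by ring
      rw [← h, sub_self] at h2
      linarith
    have huc : u ⬝ᵥ c ≠ 0 := by
      intro hh; exact hs (by rw [hkey, hh, mul_zero])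
    set t : ℝ := 2 / (u ⬝ᵥ u) with htdef
    refine ⟨1 - t • Matrix.vecMulVec u u, ?_, ?_, ?_⟩
    · rw [Matrix.transpose_sub, Matrix.transpose_one, Matrix.transpose_smul]
      congr 1
      ext i j
      simp [Matrix.vecMulVec_apply, mul_comm]
    · have ht : t * (t * (u ⬝ᵥ u)) = t + t := by
        rw [htdef]; field_simp; ring
      calc (1 - t • Matrix.vecMulVec u u) * (1 - t • Matrix.vecMulVec u u)
          = 1 - t • Matrix.vecMulVec u u -
            (t • Matrix.vecMulVec u u -
              t • (t • ((u ⬝ᵥ u) • Matrix.vecMulVec u u))) := by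
            rw [mul_sub, mul_one, sub_mul, one_mul, Matrix.smul_mul, Matrix.mul_smul, hh_aux2]
        _ = 1 := by
            rw [smul_smul, smul_smul, mul_assoc t t (u ⬝ᵥ u), ht, add_smul]
            abel
    · rw [Matrix.sub_mulVec, Matrix.one_mulVec, Matrix.smul_mulVec, hh_aux, smul_smul]
      have h1 : t * (u ⬝ᵥ c) = 1 := by
        rw [htdef, hkey]; field_simp
      rw [h1, one_smul, hudef]
      abel

lemma blockDiagonal'_mulVec {q : Type*} [Fintype q] [DecidableEq q] {m : q → Type*}
    [∀ i, Fintype (m i)] [∀ i, DecidableEq (m i)]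
    (M : ∀ i, Matrix (m i) (m i) ℝ) (v : (Σ i, m i) → ℝ) (p : Σ i, m i) :
    (Matrix.blockDiagonal' M).mulVec v p = (M p.1).mulVec (fun j => v ⟨p.1, j⟩) p.2 := by
  obtain ⟨i, j⟩ := p
  rw [Matrix.mulVec, dotProduct, ← Finset.univ_sigma_univ, Finset.sum_sigma]
  rw [Finset.sum_eq_single i]
  · simp [Matrix.mulVec, dotProduct]
  · intro i' _ hne
    apply Finset.sum_eq_zero
    intro j' _
    rw [Matrix.blockDiagonal'_apply_ne _ _ _ (Ne.symm hne), zero_mul]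
  · intro hh; exact absurd (Finset.mem_univ _) hh

lemma fin_sum_ite {n : ℕ} (hn : 0 < n) (r : ℝ) :
    ∑ j : Fin n, (if (j : ℕ) = 0 then r else 0) = r := by
  rw [Finset.sum_eq_single (⟨0, hn⟩ : Fin n)]
  · simp
  · intro j _ hj
    rw [if_neg]
    simpa [Fin.ext_iff] using hj
  · intro hh; exact absurd (Finset.mem_univ _) hh

theorem stmt13 {m0 q : ℕ} (hq : 0 < q) (m : Fin q → ℕ) (hm : ∀ i, 1 ≤ m i)
    (γ : Fin q → ℝ) (hanti : StrictAnti γ) (hne : ∀ i, γ i ≠ 0)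
    (hpos : 0 < γ ⟨0, hq⟩)
    (B : Matrix (Fin m0 ⊕ ((i : Fin q) × Fin (m i))) (Fin m0 ⊕ ((i : Fin q) × Fin (m i))) ℝ)
    (b : Fin m0 ⊕ ((i : Fin q) × Fin (m i)) → ℝ) (k : ℝ)
    (U : Matrix (Fin m0 ⊕ ((i : Fin q) × Fin (m i))) (Fin m0 ⊕ ((i : Fin q) × Fin (m i))) ℝ)
    (hU : Uᵀ * U = 1)
    (hB : B = U * Matrix.diagonal (Sum.elim (fun _ => (0 : ℝ)) (fun p => γ p.1)) * Uᵀ) :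
    let c : Fin m0 ⊕ ((i : Fin q) × Fin (m i)) → ℝ := Uᵀ.mulVec b
    let l : Fin q → ℝ := fun i => Real.sqrt (∑ j : Fin (m i), (c (Sum.inr ⟨i, j⟩)) ^ 2)
    let l0 : ℝ := Real.sqrt (∑ j : Fin m0, (c (Sum.inl j)) ^ 2)
    let δ : Fin q → ℝ := fun i => l i / |γ i|
    let ε : ℝ := l0
    let kstar : ℝ := k + ∑ i : Fin q, (l i) ^ 2 / γ i
    ∃ (V : Matrix (Fin m0 ⊕ ((i : Fin q) × Fin (m i)))
          (Fin m0 ⊕ ((i : Fin q) × Fin (m i))) ℝ)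
      (a : Fin m0 ⊕ ((i : Fin q) × Fin (m i)) → ℝ),
      Vᵀ * V = 1 ∧
      Vᵀ * B * V = Matrix.diagonal (Sum.elim (fun _ => (0 : ℝ)) (fun p => γ p.1)) ∧
      Vᵀ.mulVec (b + B.mulVec a)
        = ε • (Sum.elim (fun j : Fin m0 => if (j : ℕ) = 0 then (1 : ℝ) else 0)
            (fun _ => (0 : ℝ))) ∧
      -(Vᵀ.mulVec a)
        = Sum.elim (fun _ => (0 : ℝ))
            (fun p : (i : Fin q) × Fin (m i) => if (p.2 : ℕ) = 0 then δ p.1 else 0) ∧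
      k - a ⬝ᵥ ((2 : ℝ) • b + B.mulVec a) = kstar := by
  intro c l l0 δ ε kstar
  have hm' : ∀ i, 0 < m i := hm
  have hδ : ∀ i, δ i = l i / |γ i| := fun _ => rfl
  have hε : ε = l0 := rfl
  have hk : kstar = k + ∑ i : Fin q, (l i) ^ 2 / γ i := rfl
  have habs : ∀ i, |γ i| ≠ 0 := fun i => abs_ne_zero.mpr (hne i)
  have hl2 : ∀ i, (l i) ^ 2 = ∑ j : Fin (m i), (c (Sum.inr ⟨i, j⟩)) ^ 2 := fun i =>
    Real.sq_sqrt (Finset.sum_nonneg fun j _ => sq_nonneg _)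
  have hl02 : l0 ^ 2 = ∑ j : Fin m0, (c (Sum.inl j)) ^ 2 :=
    Real.sq_sqrt (Finset.sum_nonneg fun j _ => sq_nonneg _)
  have hnorm0 : ∑ j : Fin m0, (c (Sum.inl j)) ^ 2
      = ∑ j : Fin m0, (if (j : ℕ) = 0 then l0 else 0) ^ 2 := by
    rcases Nat.eq_zero_or_pos m0 with h | h
    · subst h
      simp
    · have e1 : ∀ j : Fin m0, ((if (j : ℕ) = 0 then l0 else 0)) ^ 2
          = if (j : ℕ) = 0 then l0 ^ 2 else 0 := fun j => by split <;> simp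
      rw [Finset.sum_congr rfl fun j _ => e1 j, fin_sum_ite h, hl02]
  have hs2 : ∀ i, (γ i / |γ i|) ^ 2 = 1 := fun i => by
    rw [div_pow, sq_abs, div_self (pow_ne_zero 2 (hne i))]
  have hnormi : ∀ i, ∑ j : Fin (m i), (c (Sum.inr ⟨i, j⟩)) ^ 2
      = ∑ j : Fin (m i), (if (j : ℕ) = 0 then (γ i / |γ i|) * l i else 0) ^ 2 := by
    intro i
    have e1 : ∀ j : Fin (m i), ((if (j : ℕ) = 0 then (γ i / |γ i|) * l i else 0)) ^ 2
        = if (j : ℕ) = 0 then (γ i / |γ i|) ^ 2 * (l i) ^ 2 else 0 := fun j => by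
      split
      · ring
      · simp
    rw [Finset.sum_congr rfl fun j _ => e1 j, fin_sum_ite (hm' i), hs2 i, one_mul, hl2 i]
  obtain ⟨P0, hP0t, hP0P, hP0c⟩ := exists_orth _ _ hnorm0
  choose Pb hPbt hPbP hPbc using fun i => exists_orth _ _ (hnormi i)
  set P : Matrix (Fin m0 ⊕ ((i : Fin q) × Fin (m i))) (Fin m0 ⊕ ((i : Fin q) × Fin (m i))) ℝ :=
    Matrix.fromBlocks P0 0 0 (Matrix.blockDiagonal' Pb) with hPdef
  have hPt : Pᵀ = P := by
    rw [hPdef, Matrix.fromBlocks_transpose, Matrix.blockDiagonal'_transpose, hP0t]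
    simp only [Matrix.transpose_zero]
    have e1 : (fun i => (Pb i)ᵀ) = Pb := funext fun i => hPbt i
    rw [e1]
  have hPP : P * P = 1 := by
    rw [hPdef, Matrix.fromBlocks_multiply]
    simp only [Matrix.mul_zero, Matrix.zero_mul, add_zero, zero_add]
    rw [hP0P, ← Matrix.blockDiagonal'_mul]
    have e2 : (fun i => Pb i * Pb i)
        = (1 : ∀ i, Matrix (Fin (m i)) (Fin (m i)) ℝ) := funext fun i => hPbP i
    rw [e2, Matrix.blockDiagonal'_one, Matrix.fromBlocks_one]
  have hDblock : (Matrix.diagonal (Sum.elim (fun _ : Fin m0 => (0 : ℝ))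
        (fun p : (i : Fin q) × Fin (m i) => γ p.1)))
      = Matrix.fromBlocks 0 0 0
        (Matrix.blockDiagonal' fun i => Matrix.diagonal fun _ : Fin (m i) => γ i) := by
    rw [Matrix.blockDiagonal'_diagonal, ← Matrix.fromBlocks_diagonal, Matrix.diagonal_zero]
  have hPDP : P * (Matrix.diagonal (Sum.elim (fun _ : Fin m0 => (0 : ℝ))
        (fun p : (i : Fin q) × Fin (m i) => γ p.1))) * P
      = Matrix.diagonal (Sum.elim (fun _ : Fin m0 => (0 : ℝ))
        (fun p : (i : Fin q) × Fin (m i) => γ p.1)) := by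
    rw [hDblock, hPdef, Matrix.fromBlocks_multiply, Matrix.fromBlocks_multiply]
    simp only [Matrix.mul_zero, Matrix.zero_mul, add_zero, zero_add]
    rw [← Matrix.blockDiagonal'_mul, ← Matrix.blockDiagonal'_mul]
    have e3 : (fun i => Pb i * Matrix.diagonal (fun _ : Fin (m i) => γ i) * Pb i)
        = fun i => Matrix.diagonal fun _ : Fin (m i) => γ i := by
      funext i
      rw [← Matrix.smul_one_eq_diagonal, Matrix.mul_smul, mul_one, Matrix.smul_mul, hPbP i]
    rw [e3]
  -- the orthogonal matrix and translation
  have hUU : ∀ X : Matrix (Fin m0 ⊕ ((i : Fin q) × Fin (m i)))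
      (Fin m0 ⊕ ((i : Fin q) × Fin (m i))) ℝ, Uᵀ * (U * X) = X := fun X => by
    rw [← Matrix.mul_assoc, hU, one_mul]
  set y : Fin m0 ⊕ ((i : Fin q) × Fin (m i)) → ℝ :=
    Sum.elim (fun _ : Fin m0 => (0 : ℝ))
      (fun p : (i : Fin q) × Fin (m i) => if (p.2 : ℕ) = 0 then -(δ p.1) else 0) with hydef
  have hVtV : (U * Pᵀ)ᵀ * (U * Pᵀ) = 1 := by
    rw [Matrix.transpose_mul, Matrix.transpose_transpose, hPt, Matrix.mul_assoc, hUU, hPP]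
  have hVtBV : (U * Pᵀ)ᵀ * B * (U * Pᵀ)
      = Matrix.diagonal (Sum.elim (fun _ : Fin m0 => (0 : ℝ))
        (fun p : (i : Fin q) × Fin (m i) => γ p.1)) := by
    rw [hB, Matrix.transpose_mul, Matrix.transpose_transpose, hPt]
    simp only [Matrix.mul_assoc]
    rw [hUU, hUU, ← Matrix.mul_assoc, hPDP]
  have hPc : P.mulVec c
      = Sum.elim (fun j : Fin m0 => if (j : ℕ) = 0 then l0 else 0)
        (fun p : (i : Fin q) × Fin (m i) =>
          if (p.2 : ℕ) = 0 then (γ p.1 / |γ p.1|) * l p.1 else 0) := by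
    rw [hPdef, Matrix.fromBlocks_mulVec]
    funext x
    cases x with
    | inl j =>
      simp only [Sum.elim_inl, Matrix.zero_mulVec, add_zero, Pi.add_apply, Pi.zero_apply]
      exact congrFun hP0c j
    | inr p =>
      simp only [Sum.elim_inr, Matrix.zero_mulVec, zero_add, Pi.add_apply, Pi.zero_apply]
      rw [blockDiagonal'_mulVec]
      exact congrFun (hPbc p.1) p.2
  have hVtb : (U * Pᵀ)ᵀ.mulVec b = P.mulVec c := by
    rw [Matrix.transpose_mul, Matrix.transpose_transpose, ← Matrix.mulVec_mulVec]
  have hDy : (Matrix.diagonal (Sum.elim (fun _ : Fin m0 => (0 : ℝ))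
        (fun p : (i : Fin q) × Fin (m i) => γ p.1))).mulVec y
      = Sum.elim (fun _ : Fin m0 => (0 : ℝ))
        (fun p : (i : Fin q) × Fin (m i) =>
          if (p.2 : ℕ) = 0 then -(γ p.1 * δ p.1) else 0) := by
    funext x
    rw [Matrix.mulVec_diagonal]
    cases x with
    | inl j => simp [hydef]
    | inr p =>
      simp only [Sum.elim_inr, hydef]
      split
      · ring
      · rw [mul_zero]
  have hVta : (U * Pᵀ)ᵀ.mulVec ((U * Pᵀ).mulVec y) = y := by
    rw [Matrix.mulVec_mulVec, hVtV, Matrix.one_mulVec]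
  have hVtBa : (U * Pᵀ)ᵀ.mulVec (B.mulVec ((U * Pᵀ).mulVec y))
      = (Matrix.diagonal (Sum.elim (fun _ : Fin m0 => (0 : ℝ))
        (fun p : (i : Fin q) × Fin (m i) => γ p.1))).mulVec y := by
    rw [Matrix.mulVec_mulVec, Matrix.mulVec_mulVec, hVtBV]
  have hdot : ∀ w, ((U * Pᵀ).mulVec y) ⬝ᵥ w = ((U * Pᵀ)ᵀ.mulVec w) ⬝ᵥ y := by
    intro w
    rw [dotProduct_comm, Matrix.dotProduct_mulVec, ← Matrix.mulVec_transpose]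
  refine ⟨U * Pᵀ, (U * Pᵀ).mulVec y, hVtV, hVtBV, ?_, ?_, ?_⟩
  · rw [Matrix.mulVec_add, hVtb, hPc, hVtBa, hDy]
    funext x
    cases x with
    | inl j =>
      simp only [Pi.add_apply, Sum.elim_inl, Pi.smul_apply, smul_eq_mul, add_zero]
      split
      · rw [mul_one]
      · rw [mul_zero]
    | inr p =>
      simp only [Pi.add_apply, Sum.elim_inr, Pi.smul_apply, smul_eq_mul, mul_zero]
      by_cases hp : (p.2 : ℕ) = 0
      · rw [if_pos hp, if_pos hp, hδ]
        field_simp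
        ring
      · rw [if_neg hp, if_neg hp, add_zero]
  · rw [hVta]
    funext x
    cases x with
    | inl j => simp [hydef]
    | inr p =>
      simp only [hydef, Sum.elim_inr, Pi.neg_apply]
      by_cases hp : (p.2 : ℕ) = 0
      · rw [if_pos hp, if_pos hp, neg_neg]
      · rw [if_neg hp, if_neg hp, neg_zero]
  · have hab : ((U * Pᵀ).mulVec y) ⬝ᵥ b = -∑ i : Fin q, (l i) ^ 2 / γ i := by
      rw [hdot, hVtb, hPc, dotProduct, Fintype.sum_sum_type]
      have e4 : ∀ j : Fin m0, (Sum.elim (fun j : Fin m0 => if (j : ℕ) = 0 then l0 else 0)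
          (fun p : (i : Fin q) × Fin (m i) =>
            if (p.2 : ℕ) = 0 then (γ p.1 / |γ p.1|) * l p.1 else 0)) (Sum.inl j)
          * y (Sum.inl j) = 0 := fun j => by simp [hydef]
      rw [Finset.sum_congr rfl fun j _ => e4 j, Finset.sum_const_zero, zero_add]
      rw [← Finset.univ_sigma_univ, Finset.sum_sigma]
      rw [← Finset.sum_neg_distrib]
      apply Finset.sum_congr rfl
      intro i _
      have e5 : ∀ j : Fin (m i), (Sum.elim (fun j : Fin m0 => if (j : ℕ) = 0 then l0 else 0)
          (fun p : (i : Fin q) × Fin (m i) =>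
            if (p.2 : ℕ) = 0 then (γ p.1 / |γ p.1|) * l p.1 else 0)) (Sum.inr ⟨i, j⟩)
          * y (Sum.inr ⟨i, j⟩)
          = if (j : ℕ) = 0 then (γ i / |γ i|) * l i * (-(δ i)) else 0 := fun j => by
        by_cases hj : (j : ℕ) = 0 <;> simp [hydef, hj]
      rw [Finset.sum_congr rfl fun j _ => e5 j, fin_sum_ite (hm' i), hδ]
      have e6 : γ i / |γ i| * l i * -(l i / |γ i|)
          = -(γ i * (l i * l i) / (|γ i| * |γ i|)) := by ring
      rw [e6, abs_mul_abs_self, mul_div_mul_left _ _ (hne i), ← pow_two]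
    have haBa : ((U * Pᵀ).mulVec y) ⬝ᵥ (B.mulVec ((U * Pᵀ).mulVec y))
        = ∑ i : Fin q, (l i) ^ 2 / γ i := by
      rw [hdot, hVtBa, hDy, dotProduct, Fintype.sum_sum_type]
      have e7 : ∀ j : Fin m0, (Sum.elim (fun _ : Fin m0 => (0 : ℝ))
          (fun p : (i : Fin q) × Fin (m i) =>
            if (p.2 : ℕ) = 0 then -(γ p.1 * δ p.1) else 0)) (Sum.inl j) * y (Sum.inl j) = 0 :=
        fun j => by simp
      rw [Finset.sum_congr rfl fun j _ => e7 j, Finset.sum_const_zero, zero_add]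
      rw [← Finset.univ_sigma_univ, Finset.sum_sigma]
      apply Finset.sum_congr rfl
      intro i _
      have e8 : ∀ j : Fin (m i), (Sum.elim (fun _ : Fin m0 => (0 : ℝ))
          (fun p : (i : Fin q) × Fin (m i) =>
            if (p.2 : ℕ) = 0 then -(γ p.1 * δ p.1) else 0)) (Sum.inr ⟨i, j⟩)
            * y (Sum.inr ⟨i, j⟩)
          = if (j : ℕ) = 0 then -(γ i * δ i) * (-(δ i)) else 0 := fun j => by
        by_cases hj : (j : ℕ) = 0 <;> simp [hydef, hj]
      rw [Finset.sum_congr rfl fun j _ => e8 j, fin_sum_ite (hm' i), hδ]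
      have e9 : -(γ i * (l i / |γ i|)) * -(l i / |γ i|)
          = γ i * (l i * l i) / (|γ i| * |γ i|) := by ring
      rw [e9, abs_mul_abs_self, mul_div_mul_left _ _ (hne i), ← pow_two]
    rw [dotProduct_add, dotProduct_smul, smul_eq_mul, hab, haBa, hk]
    ring
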